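/- Let (A, tA) be a discrete valuation ring and R = A⟦X₁,…,X_l, Y₁,…,Yₙ⟧/(X₁⋯X_l − u t^a Y^B), where u is a unit of the power series ring, a ≥ 1, and B ∈ ℕⁿ. Denote by x_i, y_j the images of X_i, Y_j. Then (t^a·y^I) = (x₁, t^a y^I) ∩ ⋯ ∩ (x_l, t^a y^I) for any I ∈ ℕⁿ with I ≤ B componentwise. Moreover, for each i, (x_i, t^a y^I) = (x_i, t^a) ∩ ⋂_{j ∈ Supp(I)} (x_i, y_j^{I(j)}) is a primary decomposition with no embedded primes, with √(x_i, t^a) = (x_i, t) and √(x_i, y_j^{I(j)}) = (x_i, y_j). -/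

import Mathlib

open MvPowerSeries

namespace DvrPSAux

variable {σ : Type*} {A : Type*} [CommRing A]

/-- “Set the variable `s` to zero”, as a function. -/
noncomputable def sz (s : σ) (f : MvPowerSeries σ A) : MvPowerSeries σ A :=
  fun m => if m s = 0 then coeff m f else 0

lemma coeff_sz (s : σ) (f : MvPowerSeries σ A) (m : σ →₀ ℕ) :
    coeff m (sz s f) = if m s = 0 then coeff m f else 0 := rfl

/-- “Set the variable `s` to zero”, as a ring hom. -/
noncomputable def setZero (s : σ) : MvPowerSeries σ A →+* MvPowerSeries σ A where
  toFun := sz s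
  map_one' := by
    classical
    ext m
    rw [coeff_sz, coeff_one]
    by_cases h0 : m = 0
    · subst h0; simp
    · simp [h0]
  map_mul' f g := by
    classical
    ext m
    rw [coeff_sz, coeff_mul, coeff_mul]
    by_cases hm : m s = 0
    · rw [if_pos hm]
      refine Finset.sum_congr rfl ?_
      rintro ⟨p, q⟩ hpq
      rw [Finset.HasAntidiagonal.mem_antidiagonal] at hpq
      have hps : p s + q s = m s := by
        have := congrArg (fun e : σ →₀ ℕ => e s) hpq
        simpa using this
      have hp : p s = 0 := by omega
      have hq : q s = 0 := by omega
      simp [coeff_sz, hp, hq]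
    · rw [if_neg hm]
      symm
      refine Finset.sum_eq_zero ?_
      rintro ⟨p, q⟩ hpq
      rw [Finset.HasAntidiagonal.mem_antidiagonal] at hpq
      have hps : p s + q s = m s := by
        have := congrArg (fun e : σ →₀ ℕ => e s) hpq
        simpa using this
      rcases Nat.eq_zero_or_pos (p s) with hp | hp
      · have hq : q s ≠ 0 := by omega
        simp [coeff_sz, hq]
      · have hp' : p s ≠ 0 := by omega
        simp [coeff_sz, hp']
  map_zero' := by ext m; simp [coeff_sz]
  map_add' f g := by
    ext m
    rw [coeff_sz]
    simp only [map_add, coeff_sz]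
    split <;> simp

lemma coeff_setZero (s : σ) (f : MvPowerSeries σ A) (m : σ →₀ ℕ) :
    coeff m (setZero s f) = if m s = 0 then coeff m f else 0 := rfl

@[simp] lemma setZero_X_self (s : σ) : setZero s (X s : MvPowerSeries σ A) = 0 := by
  ext m
  rw [coeff_setZero]
  by_cases hm : m s = 0
  · rw [if_pos hm, X_def, coeff_monomial_ne, coeff_zero]
    intro h
    rw [h] at hm
    simp at hm
  · simp [hm]

@[simp] lemma setZero_C (s : σ) (r : A) : setZero s (C (σ := σ) (R := A) r) = C (σ := σ) (R := A) r := by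
  classical
  ext m
  rw [coeff_setZero, coeff_C]
  by_cases hm : m s = 0
  · rw [if_pos hm]
  · rw [if_neg hm, if_neg]
    intro h
    rw [h] at hm
    simp at hm

lemma setZero_X_ne {s s' : σ} (h : s' ≠ s) :
    setZero s (X s' : MvPowerSeries σ A) = X s' := by
  classical
  ext m
  rw [coeff_setZero, X_def, coeff_monomial]
  by_cases hm : m s = 0
  · rw [if_pos hm]
  · rw [if_neg hm, if_neg]
    intro hms
    rw [hms] at hm
    simp [Finsupp.single_apply, h] at hm

lemma setZero_eq_zero_iff (s : σ) (f : MvPowerSeries σ A) :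
    setZero s f = 0 ↔ (X s : MvPowerSeries σ A) ∣ f := by
  rw [X_dvd_iff]
  constructor
  · intro h m hm
    have := congrArg (fun g => coeff m g) h
    simpa [coeff_setZero, hm] using this
  · intro h
    ext m
    rw [coeff_setZero]
    by_cases hm : m s = 0
    · simp [hm, h m hm]
    · simp [hm]

lemma X_dvd_sub_setZero (s : σ) (f : MvPowerSeries σ A) :
    (X s : MvPowerSeries σ A) ∣ f - setZero s f := by
  rw [X_dvd_iff]
  intro m hm
  rw [map_sub, coeff_setZero, if_pos hm, sub_self]

/-- Membership in `(X s, g)` for `g` not involving `X s`. -/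
lemma mem_span_pair_X_iff {s : σ} {g : MvPowerSeries σ A} (hg : setZero s g = g)
    (f : MvPowerSeries σ A) :
    f ∈ Ideal.span {(X s : MvPowerSeries σ A), g} ↔ g ∣ setZero s f := by
  constructor
  · intro h
    rw [Ideal.mem_span_pair] at h
    obtain ⟨p, q, rfl⟩ := h
    rw [map_add, map_mul, map_mul, setZero_X_self, mul_zero, zero_add, hg]
    exact dvd_mul_left g _
  · rintro ⟨h', hh⟩
    obtain ⟨w, hw⟩ := X_dvd_sub_setZero s f
    rw [Ideal.mem_span_pair]
    refine ⟨w, h', ?_⟩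
    have : f = X s * w + g * h' := by rw [← hh, ← hw]; ring
    rw [this]; ring

lemma C_dvd_iff {r : A} {f : MvPowerSeries σ A} :
    (C (σ := σ) (R := A) r) ∣ f ↔ ∀ m, r ∣ coeff m f := by
  constructor
  · rintro ⟨g, rfl⟩
    intro m
    rw [show (C (σ := σ) (R := A) r) = monomial 0 r from rfl, coeff_monomial_mul]
    simp
  · intro h
    obtain ⟨g, hg⟩ : ∃ g : MvPowerSeries σ A, ∀ m, coeff m f = r * coeff m g :=
      ⟨fun m => (h m).choose, fun m => (h m).choose_spec⟩
    refine ⟨g, ?_⟩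
    ext m
    rw [show (C (σ := σ) (R := A) r) = monomial 0 r from rfl, coeff_monomial_mul]
    simpa using hg m

lemma mvps_isDomain [IsDomain A] : IsDomain (MvPowerSeries σ A) :=
  NoZeroDivisors.to_isDomain _

lemma X_prime [IsDomain A] (s : σ) : Prime (X s : MvPowerSeries σ A) := by
  haveI : IsDomain (MvPowerSeries σ A) := mvps_isDomain
  have hX0 : (X s : MvPowerSeries σ A) ≠ 0 := by
    intro h
    have := congrArg (fun g => coeff (Finsupp.single s 1) g) h
    simp [coeff_index_single_self_X] at this
  rw [← Ideal.span_singleton_prime hX0]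
  have : Ideal.span {(X s : MvPowerSeries σ A)} = RingHom.ker (setZero s) := by
    ext f
    rw [Ideal.mem_span_singleton, RingHom.mem_ker, setZero_eq_zero_iff]
  rw [this]
  exact RingHom.ker_isPrime _

lemma C_prime [IsDomain A] {t : A} (ht0 : t ≠ 0) (hpr : (Ideal.span {t}).IsPrime) :
    Prime (C (σ := σ) (R := A) t) := by
  haveI : IsDomain (MvPowerSeries σ A) := mvps_isDomain
  have hC0 : (C (σ := σ) (R := A) t) ≠ 0 := by
    intro h
    have := congrArg (fun g => constantCoeff (σ := σ) (R := A) g) h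
    simp [constantCoeff_C] at this
    exact ht0 this
  rw [← Ideal.span_singleton_prime hC0]
  haveI : IsDomain (A ⧸ Ideal.span {t}) := Ideal.Quotient.isDomain _
  haveI : IsDomain (MvPowerSeries σ (A ⧸ Ideal.span {t})) := mvps_isDomain
  have : Ideal.span {(C (σ := σ) (R := A) t)} =
      RingHom.ker (map (σ := σ) (Ideal.Quotient.mk (Ideal.span {t}))) := by
    ext f
    rw [Ideal.mem_span_singleton, RingHom.mem_ker, C_dvd_iff]
    rw [MvPowerSeries.ext_iff]
    apply forall_congr'
    intro m
    rw [coeff_map, coeff_zero, Ideal.Quotient.eq_zero_iff_mem, Ideal.mem_span_singleton]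
  rw [this]
  exact RingHom.ker_isPrime _

lemma prod_pow_dvd_of_dvd {S : Type*} [CommMonoidWithZero S] [IsCancelMulZero S] {ι : Type*}
    [DecidableEq ι] (s : Finset ι) (p : ι → S) (k : ι → ℕ) (G : S)
    (hp : ∀ i ∈ s, Prime (p i))
    (hnd : ∀ i ∈ s, ∀ j ∈ s, i ≠ j → ¬ p i ∣ p j)
    (h : ∀ i ∈ s, p i ^ k i ∣ G) :
    (∏ i ∈ s, p i ^ k i) ∣ G := by
  induction s using Finset.induction generalizing G with
  | empty => simpa using one_dvd G
  | @insert a s ha ih =>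
    obtain ⟨H, rfl⟩ := h a (Finset.mem_insert_self a s)
    rw [Finset.prod_insert ha]
    refine mul_dvd_mul_left _ (ih H (fun i hi => hp i (Finset.mem_insert_of_mem hi))
      (fun i hi j hj hij => hnd i (Finset.mem_insert_of_mem hi) j
        (Finset.mem_insert_of_mem hj) hij) ?_)
    intro i hi
    have hia : i ≠ a := by rintro rfl; exact ha hi
    have hprime := hp i (Finset.mem_insert_of_mem hi)
    have hnda : ¬ p i ∣ p a ^ k a := by
      intro hd
      exact hnd i (Finset.mem_insert_of_mem hi) a (Finset.mem_insert_self a s) hia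
        (hprime.dvd_of_dvd_pow hd)
    exact hprime.pow_dvd_of_dvd_mul_left _ hnda
      (h i (Finset.mem_insert_of_mem hi))

lemma prod_X_pow_monomial {ι : Type*} (s : Finset ι) (e : ι → σ) (k : ι → ℕ) :
    (∏ i ∈ s, (X (e i) : MvPowerSeries σ A) ^ k i) =
      monomial (∑ i ∈ s, Finsupp.single (e i) (k i)) 1 := by
  classical
  induction s using Finset.induction with
  | empty => simp [monomial_zero_one]
  | @insert a s ha ih =>
    rw [Finset.prod_insert ha, Finset.sum_insert ha, ih, X_pow_eq,
      monomial_mul_monomial, one_mul]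

lemma C_dvd_iff_map {r : A} (g : MvPowerSeries σ A) :
    C (σ := σ) (R := A) r ∣ g ↔ map (σ := σ) (Ideal.Quotient.mk (Ideal.span {r})) g = 0 := by
  rw [C_dvd_iff, MvPowerSeries.ext_iff]
  apply forall_congr'
  intro m
  rw [coeff_map, coeff_zero, Ideal.Quotient.eq_zero_iff_mem, Ideal.mem_span_singleton]

section Transfer

variable {R S : Type*} [CommRing R] [CommRing S] (f : R →+* S)

lemma comap_map_self (hf : Function.Surjective f) {Q : Ideal R} (hQ : RingHom.ker f ≤ Q) :
    Ideal.comap f (Ideal.map f Q) = Q := by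
  rw [Ideal.comap_map_of_surjective f hf, ← RingHom.ker_eq_comap_bot, sup_eq_left.mpr hQ]

lemma isPrimary_map (hf : Function.Surjective f) {Q : Ideal R} (hQ : RingHom.ker f ≤ Q) (h : Q.IsPrimary) :
    (Ideal.map f Q).IsPrimary := by
  rw [Ideal.isPrimary_iff] at h ⊢
  obtain ⟨hne, hp⟩ := h
  constructor
  · intro htop
    apply hne
    have h2 := comap_map_self f hf hQ
    rw [htop, Ideal.comap_top] at h2
    exact h2.symm
  · intro xx yy hxy
    obtain ⟨aa, rfl⟩ := hf xx
    obtain ⟨bb, rfl⟩ := hf yy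
    have hab : aa * bb ∈ Q := by
      rw [← comap_map_self f hf hQ]
      exact Ideal.mem_comap.mpr (by rw [map_mul]; exact hxy)
    rcases hp hab with h1 | h2
    · exact Or.inl (Ideal.mem_map_of_mem f h1)
    · obtain ⟨k, hk⟩ := Ideal.mem_radical_iff.mp h2
      exact Or.inr (Ideal.mem_radical_iff.mpr
        ⟨k, by rw [← map_pow]; exact Ideal.mem_map_of_mem f hk⟩)

lemma map_span_pair (p q : R) :
    Ideal.map f (Ideal.span {p, q}) = Ideal.span {f p, f q} := by
  rw [Ideal.map_span, Set.image_pair]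

lemma comap_iInf' {ι : Sort*} (g : ι → Ideal S) :
    Ideal.comap f (⨅ i, g i) = ⨅ i, Ideal.comap f (g i) := by
  ext r
  simp [Ideal.mem_comap, Ideal.mem_iInf]

end Transfer

end DvrPSAux

open DvrPSAux

/-- Primary decomposition in `R = A⟦X₁,…,X_l, Y₁,…,Yₙ⟧/(X₁⋯X_l − u tᵃ Y^B)` over a
discrete valuation ring `(A, tA)`:  for `I ≤ B` one has
`(tᵃ y^I) = ⋂ᵢ (xᵢ, tᵃ y^I)`, and for each `i`,
`(xᵢ, tᵃ y^I) = (xᵢ, tᵃ) ∩ ⋂_{j ∈ Supp I} (xᵢ, yⱼ^{I j})` is a primary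
decomposition with no embedded primes (the radicals `(xᵢ, t)`, `(xᵢ, yⱼ)` are
pairwise incomparable), with `√(xᵢ, tᵃ) = (xᵢ, t)` and `√(xᵢ, yⱼ^{I j}) = (xᵢ, yⱼ)`. -/
theorem dvr_powerSeries_primary_decomposition
    (A : Type*) [CommRing A] [IsDomain A] [IsDiscreteValuationRing A]
    (t : A) (ht : IsLocalRing.maximalIdeal A = Ideal.span {t})
    (l n : ℕ) (hl : 1 ≤ l)
    (u : (MvPowerSeries (Fin l ⊕ Fin n) A)ˣ)
    (a : ℕ) (ha : 1 ≤ a) (B I : Fin n → ℕ) (hIB : ∀ j, I j ≤ B j) :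
    letI J : Ideal (MvPowerSeries (Fin l ⊕ Fin n) A) :=
      Ideal.span {(∏ i : Fin l, X (Sum.inl i)) -
        (u : MvPowerSeries (Fin l ⊕ Fin n) A) * C (σ := Fin l ⊕ Fin n) (R := A) (t ^ a) *
          ∏ j : Fin n, (X (Sum.inr j) : MvPowerSeries (Fin l ⊕ Fin n) A) ^ B j}
    letI mk := Ideal.Quotient.mk J
    letI x : Fin l → _ := fun i => mk (X (Sum.inl i))
    letI y : Fin n → _ := fun j => mk (X (Sum.inr j))
    letI c := mk (C (σ := Fin l ⊕ Fin n) (R := A) (t ^ a)) * ∏ j : Fin n, y j ^ I j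
    (Ideal.span {c} = ⨅ i : Fin l, Ideal.span {x i, c}) ∧
    (∀ i : Fin l,
      (Ideal.span {x i, c} =
        Ideal.span {x i, mk (C (σ := Fin l ⊕ Fin n) (R := A) (t ^ a))} ⊓
          ⨅ j ∈ {j : Fin n | 0 < I j}, Ideal.span {x i, y j ^ I j}) ∧
      (Ideal.span {x i, mk (C (σ := Fin l ⊕ Fin n) (R := A) (t ^ a))}).IsPrimary ∧
      (∀ j : Fin n, 0 < I j → (Ideal.span {x i, y j ^ I j}).IsPrimary) ∧
      ((Ideal.span {x i, mk (C (σ := Fin l ⊕ Fin n) (R := A) (t ^ a))}).radical =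
        Ideal.span {x i, mk (C (σ := Fin l ⊕ Fin n) (R := A) t)}) ∧
      (∀ j : Fin n, 0 < I j →
        (Ideal.span {x i, y j ^ I j}).radical = Ideal.span {x i, y j}) ∧
      -- no embedded primes: the radicals are pairwise incomparable
      (∀ j : Fin n, 0 < I j →
        ¬ Ideal.span {x i, mk (C (σ := Fin l ⊕ Fin n) (R := A) t)} ≤ Ideal.span {x i, y j} ∧
        ¬ Ideal.span {x i, y j} ≤ Ideal.span {x i, mk (C (σ := Fin l ⊕ Fin n) (R := A) t)}) ∧
      (∀ j j' : Fin n, 0 < I j → 0 < I j' → j ≠ j' →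
        ¬ Ideal.span {x i, y j} ≤ Ideal.span {x i, y j'})) := by
  classical
  haveI : IsDomain (MvPowerSeries (Fin l ⊕ Fin n) A) := mvps_isDomain
  -- basic facts about t
  have hmax : (Ideal.span {t} : Ideal A).IsMaximal := ht ▸ IsLocalRing.maximalIdeal.isMaximal A
  have ht0 : t ≠ 0 := by
    intro h
    exact IsDiscreteValuationRing.not_a_field A
      (by rw [ht, h]; exact Ideal.span_singleton_eq_bot.mpr rfl)
  have htnu : ¬ IsUnit t := fun h => hmax.ne_top (Ideal.span_singleton_eq_top.mpr h)
  have hta0 : t ^ a ≠ 0 := pow_ne_zero _ ht0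
  have hCp : Prime (C (σ := Fin l ⊕ Fin n) (R := A) t) := C_prime ht0 hmax.isPrime
  have hXp : ∀ s : Fin l ⊕ Fin n, Prime (X s : MvPowerSeries (Fin l ⊕ Fin n) A) :=
    fun s => X_prime s
  have hCa : (C (σ := Fin l ⊕ Fin n) (R := A) (t ^ a)) = (C (σ := Fin l ⊕ Fin n) (R := A) t) ^ a := by rw [map_pow]
  have hXndC : ∀ j : Fin n,
      ¬ ((X (Sum.inr j) : MvPowerSeries (Fin l ⊕ Fin n) A) ∣ C (σ := Fin l ⊕ Fin n) (R := A) (t ^ a)) := by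
    intro j hd
    rw [X_dvd_iff] at hd
    have h0 := hd 0 rfl
    rw [show (coeff 0 (C (σ := Fin l ⊕ Fin n) (R := A) (t ^ a))) = t ^ a by simp [coeff_C]] at h0
    exact hta0 h0
  have hXndX : ∀ (s s' : Fin l ⊕ Fin n), s ≠ s' →
      ¬ ((X s : MvPowerSeries (Fin l ⊕ Fin n) A) ∣ X s') := by
    intro s s' hne hd
    rw [X_dvd_iff] at hd
    have h1 := hd (Finsupp.single s' 1) (Finsupp.single_eq_of_ne' (Ne.symm hne))
    rw [coeff_index_single_self_X] at h1
    exact one_ne_zero h1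
  -- abbreviations
  set ρ : MvPowerSeries (Fin l ⊕ Fin n) A :=
    (∏ i : Fin l, X (Sum.inl i)) -
      (u : MvPowerSeries (Fin l ⊕ Fin n) A) * C (σ := Fin l ⊕ Fin n) (R := A) (t ^ a) *
        ∏ j : Fin n, (X (Sum.inr j) : MvPowerSeries (Fin l ⊕ Fin n) A) ^ B j with hρ
  set Jd : Ideal (MvPowerSeries (Fin l ⊕ Fin n) A) := Ideal.span {ρ} with hJd
  set mk : MvPowerSeries (Fin l ⊕ Fin n) A →+* (MvPowerSeries (Fin l ⊕ Fin n) A ⧸ Jd) :=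
    Ideal.Quotient.mk Jd with hmk
  set D : MvPowerSeries (Fin l ⊕ Fin n) A :=
    C (σ := Fin l ⊕ Fin n) (R := A) (t ^ a) *
      ∏ j : Fin n, (X (Sum.inr j) : MvPowerSeries (Fin l ⊕ Fin n) A) ^ I j with hD
  -- setZero stability
  have hszY : ∀ (i : Fin l) (j : Fin n) (k : ℕ),
      setZero (Sum.inl i) ((X (Sum.inr j) : MvPowerSeries (Fin l ⊕ Fin n) A) ^ k)
        = X (Sum.inr j) ^ k := by
    intro i j k
    rw [map_pow, setZero_X_ne (by simp)]
  have hszD : ∀ i : Fin l, setZero (Sum.inl i) D = D := by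
    intro i
    rw [hD, map_mul, setZero_C, map_prod]
    congr 1
    exact Finset.prod_congr rfl fun j _ => hszY i j (I j)
  -- divisibility by D
  have hD_dvd : ∀ F : MvPowerSeries (Fin l ⊕ Fin n) A,
      D ∣ F ↔ (C (σ := Fin l ⊕ Fin n) (R := A) (t ^ a) ∣ F ∧
        ∀ j : Fin n, (X (Sum.inr j) : MvPowerSeries (Fin l ⊕ Fin n) A) ^ I j ∣ F) := by
    intro F
    constructor
    · intro hdF
      refine ⟨dvd_trans ?_ hdF, fun j => dvd_trans ?_ hdF⟩
      · rw [hD]; exact dvd_mul_right _ _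
      · rw [hD]
        exact (Finset.dvd_prod_of_mem _ (Finset.mem_univ j)).mul_left _
    · rintro ⟨⟨G, rfl⟩, hj⟩
      have hG : ∀ j : Fin n, (X (Sum.inr j) : MvPowerSeries (Fin l ⊕ Fin n) A) ^ I j ∣ G := by
        intro j
        exact (hXp (Sum.inr j)).pow_dvd_of_dvd_mul_left _ (hXndC j) (hj j)
      have hprod := prod_pow_dvd_of_dvd Finset.univ
        (fun j : Fin n => (X (Sum.inr j) : MvPowerSeries (Fin l ⊕ Fin n) A)) I G
        (fun j _ => hXp _)
        (fun j _ j' _ hne => hXndX _ _ (by simp [hne])) (fun j _ => hG j)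
      rw [hD]
      exact mul_dvd_mul_left _ hprod
  -- membership characterizations
  have hQd : ∀ (i : Fin l) (f : MvPowerSeries (Fin l ⊕ Fin n) A),
      f ∈ Ideal.span {(X (Sum.inl i) : MvPowerSeries (Fin l ⊕ Fin n) A), D} ↔
        D ∣ setZero (Sum.inl i) f := fun i f => mem_span_pair_X_iff (hszD i) f
  have hQ1 : ∀ (i : Fin l) (f : MvPowerSeries (Fin l ⊕ Fin n) A),
      f ∈ Ideal.span {(X (Sum.inl i) : MvPowerSeries (Fin l ⊕ Fin n) A),
        C (σ := Fin l ⊕ Fin n) (R := A) (t ^ a)} ↔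
        C (σ := Fin l ⊕ Fin n) (R := A) (t ^ a) ∣ setZero (Sum.inl i) f :=
    fun i f => mem_span_pair_X_iff (setZero_C _ _) f
  have hQ2 : ∀ (i : Fin l) (j : Fin n) (k : ℕ) (f : MvPowerSeries (Fin l ⊕ Fin n) A),
      f ∈ Ideal.span {(X (Sum.inl i) : MvPowerSeries (Fin l ⊕ Fin n) A),
        (X (Sum.inr j) : MvPowerSeries (Fin l ⊕ Fin n) A) ^ k} ↔
        (X (Sum.inr j) : MvPowerSeries (Fin l ⊕ Fin n) A) ^ k ∣ setZero (Sum.inl i) f :=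
    fun i j k f => mem_span_pair_X_iff (hszY i j k) f
  have hQt : ∀ (i : Fin l) (f : MvPowerSeries (Fin l ⊕ Fin n) A),
      f ∈ Ideal.span {(X (Sum.inl i) : MvPowerSeries (Fin l ⊕ Fin n) A),
        C (σ := Fin l ⊕ Fin n) (R := A) t} ↔
        C (σ := Fin l ⊕ Fin n) (R := A) t ∣ setZero (Sum.inl i) f :=
    fun i f => mem_span_pair_X_iff (setZero_C _ _) f
  have hQy : ∀ (i : Fin l) (j : Fin n) (f : MvPowerSeries (Fin l ⊕ Fin n) A),
      f ∈ Ideal.span {(X (Sum.inl i) : MvPowerSeries (Fin l ⊕ Fin n) A),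
        (X (Sum.inr j) : MvPowerSeries (Fin l ⊕ Fin n) A)} ↔
        (X (Sum.inr j) : MvPowerSeries (Fin l ⊕ Fin n) A) ∣ setZero (Sum.inl i) f :=
    fun i j f => mem_span_pair_X_iff (setZero_X_ne (by simp)) f
  -- S-side primes
  have hPt : ∀ i : Fin l, (Ideal.span {(X (Sum.inl i) : MvPowerSeries (Fin l ⊕ Fin n) A),
      C (σ := Fin l ⊕ Fin n) (R := A) t}).IsPrime := by
    intro i
    haveI := hmax.isPrime
    haveI : IsDomain (A ⧸ Ideal.span {t}) := Ideal.Quotient.isDomain _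
    haveI : IsDomain (MvPowerSeries (Fin l ⊕ Fin n) (A ⧸ Ideal.span {t})) := mvps_isDomain
    have hkr : Ideal.span {(X (Sum.inl i) : MvPowerSeries (Fin l ⊕ Fin n) A),
        C (σ := Fin l ⊕ Fin n) (R := A) t} =
        RingHom.ker ((map (σ := Fin l ⊕ Fin n) (Ideal.Quotient.mk (Ideal.span {t}))).comp
          (setZero (Sum.inl i))) := by
      ext f
      rw [hQt i f, RingHom.mem_ker, RingHom.comp_apply]
      exact C_dvd_iff_map _
    rw [hkr]
    exact RingHom.ker_isPrime _
  have hPy : ∀ (i : Fin l) (j : Fin n),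
      (Ideal.span {(X (Sum.inl i) : MvPowerSeries (Fin l ⊕ Fin n) A),
        (X (Sum.inr j) : MvPowerSeries (Fin l ⊕ Fin n) A)}).IsPrime := by
    intro i j
    have hkr : Ideal.span {(X (Sum.inl i) : MvPowerSeries (Fin l ⊕ Fin n) A),
        (X (Sum.inr j) : MvPowerSeries (Fin l ⊕ Fin n) A)} =
        RingHom.ker ((setZero (Sum.inr j)).comp (setZero (Sum.inl i))) := by
      ext f
      rw [hQy i j f, RingHom.mem_ker, RingHom.comp_apply]
      exact (setZero_eq_zero_iff _ _).symm
    rw [hkr]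
    exact RingHom.ker_isPrime _
  -- S-side radicals
  have hrad1 : ∀ i : Fin l,
      (Ideal.span {(X (Sum.inl i) : MvPowerSeries (Fin l ⊕ Fin n) A),
        C (σ := Fin l ⊕ Fin n) (R := A) (t ^ a)}).radical =
      Ideal.span {(X (Sum.inl i) : MvPowerSeries (Fin l ⊕ Fin n) A),
        C (σ := Fin l ⊕ Fin n) (R := A) t} := by
    intro i
    apply le_antisymm
    · have hle : Ideal.span {(X (Sum.inl i) : MvPowerSeries (Fin l ⊕ Fin n) A),
          C (σ := Fin l ⊕ Fin n) (R := A) (t ^ a)} ≤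
          Ideal.span {(X (Sum.inl i) : MvPowerSeries (Fin l ⊕ Fin n) A),
            C (σ := Fin l ⊕ Fin n) (R := A) t} := by
        rw [Ideal.span_le, Set.insert_subset_iff, Set.singleton_subset_iff]
        refine ⟨Ideal.subset_span (by simp), ?_⟩
        rw [SetLike.mem_coe, hCa]
        exact Ideal.pow_mem_of_mem _ (Ideal.subset_span (by simp)) _ (by omega)
      calc (Ideal.span {(X (Sum.inl i) : MvPowerSeries (Fin l ⊕ Fin n) A),
            C (σ := Fin l ⊕ Fin n) (R := A) (t ^ a)}).radical
          ≤ (Ideal.span {(X (Sum.inl i) : MvPowerSeries (Fin l ⊕ Fin n) A),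
            C (σ := Fin l ⊕ Fin n) (R := A) t}).radical := Ideal.radical_mono hle
        _ = _ := (hPt i).radical
    · rw [Ideal.span_le, Set.insert_subset_iff, Set.singleton_subset_iff]
      constructor
      · exact Ideal.le_radical (Ideal.subset_span (by simp))
      · exact Ideal.mem_radical_iff.mpr ⟨a, by rw [← hCa]; exact Ideal.subset_span (by simp)⟩
  have hrad2 : ∀ (i : Fin l) (j : Fin n), 0 < I j →
      (Ideal.span {(X (Sum.inl i) : MvPowerSeries (Fin l ⊕ Fin n) A),
        (X (Sum.inr j) : MvPowerSeries (Fin l ⊕ Fin n) A) ^ I j}).radical =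
      Ideal.span {(X (Sum.inl i) : MvPowerSeries (Fin l ⊕ Fin n) A),
        (X (Sum.inr j) : MvPowerSeries (Fin l ⊕ Fin n) A)} := by
    intro i j hj
    apply le_antisymm
    · have hle : Ideal.span {(X (Sum.inl i) : MvPowerSeries (Fin l ⊕ Fin n) A),
          (X (Sum.inr j) : MvPowerSeries (Fin l ⊕ Fin n) A) ^ I j} ≤
          Ideal.span {(X (Sum.inl i) : MvPowerSeries (Fin l ⊕ Fin n) A),
            (X (Sum.inr j) : MvPowerSeries (Fin l ⊕ Fin n) A)} := by
        rw [Ideal.span_le, Set.insert_subset_iff, Set.singleton_subset_iff]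
        refine ⟨Ideal.subset_span (by simp), ?_⟩
        rw [SetLike.mem_coe]
        exact Ideal.pow_mem_of_mem _ (Ideal.subset_span (by simp)) _ hj
      calc (Ideal.span {(X (Sum.inl i) : MvPowerSeries (Fin l ⊕ Fin n) A),
            (X (Sum.inr j) : MvPowerSeries (Fin l ⊕ Fin n) A) ^ I j}).radical
          ≤ (Ideal.span {(X (Sum.inl i) : MvPowerSeries (Fin l ⊕ Fin n) A),
            (X (Sum.inr j) : MvPowerSeries (Fin l ⊕ Fin n) A)}).radical :=
            Ideal.radical_mono hle
        _ = _ := (hPy i j).radical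
    · rw [Ideal.span_le, Set.insert_subset_iff, Set.singleton_subset_iff]
      constructor
      · exact Ideal.le_radical (Ideal.subset_span (by simp))
      · exact Ideal.mem_radical_iff.mpr ⟨I j, Ideal.subset_span (by simp)⟩
  -- S-side primary
  have hprim1 : ∀ i : Fin l,
      (Ideal.span {(X (Sum.inl i) : MvPowerSeries (Fin l ⊕ Fin n) A),
        C (σ := Fin l ⊕ Fin n) (R := A) (t ^ a)}).IsPrimary := by
    intro i
    rw [Ideal.isPrimary_iff]
    constructor
    · intro htop
      have h1 : (1 : MvPowerSeries (Fin l ⊕ Fin n) A) ∈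
          Ideal.span {(X (Sum.inl i) : MvPowerSeries (Fin l ⊕ Fin n) A),
            C (σ := Fin l ⊕ Fin n) (R := A) (t ^ a)} := htop ▸ Submodule.mem_top
      rw [hQ1 i 1, map_one] at h1
      have h2 := (isUnit_of_dvd_one h1).map (constantCoeff (σ := Fin l ⊕ Fin n) (R := A))
      rw [constantCoeff_C] at h2
      exact htnu (isUnit_of_dvd_unit (dvd_pow_self t (by omega)) h2)
    · intro f g hfg
      rw [hQ1, map_mul] at hfg
      by_cases hgt : C (σ := Fin l ⊕ Fin n) (R := A) t ∣ setZero (Sum.inl i) g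
      · right
        rw [hrad1 i, hQt]
        exact hgt
      · left
        rw [hQ1]
        rw [hCa] at hfg ⊢
        exact hCp.pow_dvd_of_dvd_mul_right _ hgt hfg
  have hprim2 : ∀ (i : Fin l) (j : Fin n), 0 < I j →
      (Ideal.span {(X (Sum.inl i) : MvPowerSeries (Fin l ⊕ Fin n) A),
        (X (Sum.inr j) : MvPowerSeries (Fin l ⊕ Fin n) A) ^ I j}).IsPrimary := by
    intro i j hj
    rw [Ideal.isPrimary_iff]
    constructor
    · intro htop
      have h1 : (1 : MvPowerSeries (Fin l ⊕ Fin n) A) ∈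
          Ideal.span {(X (Sum.inl i) : MvPowerSeries (Fin l ⊕ Fin n) A),
            (X (Sum.inr j) : MvPowerSeries (Fin l ⊕ Fin n) A) ^ I j} := htop ▸ Submodule.mem_top
      rw [hQ2 i j (I j) 1, map_one] at h1
      exact (hXp (Sum.inr j)).not_unit
        (isUnit_of_dvd_unit (dvd_pow_self _ (by omega)) (isUnit_of_dvd_one h1))
    · intro f g hfg
      rw [hQ2, map_mul] at hfg
      by_cases hgt : (X (Sum.inr j) : MvPowerSeries (Fin l ⊕ Fin n) A) ∣ setZero (Sum.inl i) g
      · right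
        rw [hrad2 i j hj, hQy]
        exact hgt
      · left
        rw [hQ2]
        exact (hXp (Sum.inr j)).pow_dvd_of_dvd_mul_right _ hgt hfg
  -- facts about ρ
  have hψρ : ∀ i : Fin l, setZero (Sum.inl i) ρ =
      -(setZero (Sum.inl i) ((u : MvPowerSeries (Fin l ⊕ Fin n) A)) *
        (C (σ := Fin l ⊕ Fin n) (R := A) (t ^ a) *
          ∏ j : Fin n, (X (Sum.inr j) : MvPowerSeries (Fin l ⊕ Fin n) A) ^ B j)) := by
    intro i
    have hz : setZero (Sum.inl i)
        (∏ i' : Fin l, (X (Sum.inl i') : MvPowerSeries (Fin l ⊕ Fin n) A)) = 0 := by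
      rw [map_prod]
      exact Finset.prod_eq_zero (Finset.mem_univ i) (setZero_X_self _)
    have hprodB : (∏ j : Fin n, setZero (Sum.inl i)
        ((X (Sum.inr j) : MvPowerSeries (Fin l ⊕ Fin n) A) ^ B j)) =
        ∏ j : Fin n, (X (Sum.inr j) : MvPowerSeries (Fin l ⊕ Fin n) A) ^ B j :=
      Finset.prod_congr rfl fun j _ => by rw [map_pow, setZero_X_ne (by simp)]
    rw [hρ, map_sub, hz, map_mul, map_mul, setZero_C, map_prod, hprodB, zero_sub]
    ring
  have hBsplit : (∏ j : Fin n, (X (Sum.inr j) : MvPowerSeries (Fin l ⊕ Fin n) A) ^ B j) =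
      (∏ j : Fin n, (X (Sum.inr j) : MvPowerSeries (Fin l ⊕ Fin n) A) ^ I j) *
        ∏ j : Fin n, (X (Sum.inr j) : MvPowerSeries (Fin l ⊕ Fin n) A) ^ (B j - I j) := by
    rw [← Finset.prod_mul_distrib]
    exact Finset.prod_congr rfl fun j _ => by rw [← pow_add, Nat.add_sub_cancel' (hIB j)]
  have hDdvdBterm : D ∣ C (σ := Fin l ⊕ Fin n) (R := A) (t ^ a) *
      ∏ j : Fin n, (X (Sum.inr j) : MvPowerSeries (Fin l ⊕ Fin n) A) ^ B j := by
    refine ⟨∏ j : Fin n, (X (Sum.inr j) : MvPowerSeries (Fin l ⊕ Fin n) A) ^ (B j - I j), ?_⟩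
    rw [hD, hBsplit]
    ring
  have hρQd : ∀ i : Fin l, ρ ∈ Ideal.span
      {(X (Sum.inl i) : MvPowerSeries (Fin l ⊕ Fin n) A), D} := by
    intro i
    rw [hQd, hψρ i]
    exact dvd_neg.mpr (hDdvdBterm.mul_left _)
  have hρQ1 : ∀ i : Fin l, ρ ∈ Ideal.span
      {(X (Sum.inl i) : MvPowerSeries (Fin l ⊕ Fin n) A), C (σ := Fin l ⊕ Fin n) (R := A) (t ^ a)} := by
    intro i
    rw [hQ1, hψρ i]
    exact dvd_neg.mpr ((dvd_mul_right _ _).mul_left _)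
  have hρQ2 : ∀ (i : Fin l) (j : Fin n), ρ ∈ Ideal.span
      {(X (Sum.inl i) : MvPowerSeries (Fin l ⊕ Fin n) A),
        (X (Sum.inr j) : MvPowerSeries (Fin l ⊕ Fin n) A) ^ I j} := by
    intro i j
    rw [hQ2, hψρ i]
    refine dvd_neg.mpr (dvd_mul_of_dvd_right (dvd_mul_of_dvd_right ?_ _) _)
    exact (pow_dvd_pow _ (hIB j)).trans (Finset.dvd_prod_of_mem _ (Finset.mem_univ j))
  have hρQt : ∀ i : Fin l, ρ ∈ Ideal.span
      {(X (Sum.inl i) : MvPowerSeries (Fin l ⊕ Fin n) A), C (σ := Fin l ⊕ Fin n) (R := A) t} := by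
    intro i
    rw [hQt, hψρ i]
    refine dvd_neg.mpr (dvd_mul_of_dvd_right ?_ _)
    have hCdvd : C (σ := Fin l ⊕ Fin n) (R := A) t ∣ C (σ := Fin l ⊕ Fin n) (R := A) (t ^ a) := by
      rw [hCa]
      exact dvd_pow_self _ (by omega)
    exact hCdvd.trans (dvd_mul_right _ _)
  have hρQy : ∀ (i : Fin l) (j : Fin n), 0 < I j → ρ ∈ Ideal.span
      {(X (Sum.inl i) : MvPowerSeries (Fin l ⊕ Fin n) A),
        (X (Sum.inr j) : MvPowerSeries (Fin l ⊕ Fin n) A)} := by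
    intro i j hj
    rw [hQy, hψρ i]
    refine dvd_neg.mpr (dvd_mul_of_dvd_right (dvd_mul_of_dvd_right ?_ _) _)
    exact (dvd_pow_self _ (by have := hIB j; omega : B j ≠ 0)).trans
      (Finset.dvd_prod_of_mem _ (Finset.mem_univ j))
  have hJle : ∀ {K : Ideal (MvPowerSeries (Fin l ⊕ Fin n) A)}, ρ ∈ K → Jd ≤ K := by
    intro K hK
    rw [hJd]
    exact Ideal.span_le.mpr (Set.singleton_subset_iff.mpr hK)
  -- quotient transfer
  have hker : RingHom.ker mk = Jd := Ideal.mk_ker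
  have hsurj : Function.Surjective mk := Ideal.Quotient.mk_surjective
  have hmapQ : ∀ p q : MvPowerSeries (Fin l ⊕ Fin n) A,
      Ideal.span {mk p, mk q} = Ideal.map mk (Ideal.span {p, q}) :=
    fun p q => (map_span_pair mk p q).symm
  -- S-side decomposition
  have hdecompS : ∀ i : Fin l,
      Ideal.span {(X (Sum.inl i) : MvPowerSeries (Fin l ⊕ Fin n) A), D} =
      Ideal.span {(X (Sum.inl i) : MvPowerSeries (Fin l ⊕ Fin n) A),
        C (σ := Fin l ⊕ Fin n) (R := A) (t ^ a)} ⊓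
        ⨅ j ∈ {j : Fin n | 0 < I j},
          Ideal.span {(X (Sum.inl i) : MvPowerSeries (Fin l ⊕ Fin n) A),
            (X (Sum.inr j) : MvPowerSeries (Fin l ⊕ Fin n) A) ^ I j} := by
    intro i
    ext f
    simp only [Ideal.mem_inf, Ideal.mem_iInf, Set.mem_setOf_eq]
    rw [hQd i f, hQ1 i f]
    constructor
    · intro h
      rcases (hD_dvd _).mp h with ⟨h1, h2⟩
      exact ⟨h1, fun j _ => (hQ2 i j (I j) f).mpr (h2 j)⟩
    · rintro ⟨h1, h2⟩
      refine (hD_dvd _).mpr ⟨h1, fun j => ?_⟩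
      by_cases hj : 0 < I j
      · exact (hQ2 i j (I j) f).mp (h2 j hj)
      · rw [(by omega : I j = 0), pow_zero]
        exact one_dvd _
  -- rewrite the goal in terms of mk D
  simp only [← map_pow, ← map_prod, ← map_mul, ← hD]
  constructor
  · -- main intersection
    apply le_antisymm
    · rw [Ideal.span_le, Set.singleton_subset_iff, SetLike.mem_coe, Ideal.mem_iInf]
      intro i
      exact Ideal.subset_span (by simp)
    · intro ξ hξ
      obtain ⟨F, rfl⟩ := hsurj ξ
      rw [Ideal.mem_iInf] at hξ
      have hFi : ∀ i : Fin l, D ∣ setZero (Sum.inl i) F := by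
        intro i
        have h1 := hξ i
        rw [hmapQ] at h1
        have h2 : F ∈ Ideal.comap mk (Ideal.map mk
            (Ideal.span {(X (Sum.inl i) : MvPowerSeries (Fin l ⊕ Fin n) A), D})) :=
          Ideal.mem_comap.mpr h1
        rw [comap_map_self mk hsurj (by rw [hker]; exact hJle (hρQd i))] at h2
        exact (hQd i F).mp h2
      set one1 : (Fin l ⊕ Fin n) →₀ ℕ :=
        ∑ i : Fin l, Finsupp.single (Sum.inl i) 1 with h1def
      have h1l : ∀ i : Fin l, one1 (Sum.inl i) = 1 := by
        intro i
        rw [h1def, Finsupp.finset_sum_apply]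
        rw [Finset.sum_eq_single i]
        · simp
        · intro b _ hb
          exact Finsupp.single_eq_of_ne' (by simpa using hb)
        · intro hi
          exact absurd (Finset.mem_univ i) hi
      have h1r : ∀ j : Fin n, one1 (Sum.inr j) = 0 := by
        intro j
        rw [h1def, Finsupp.finset_sum_apply]
        exact Finset.sum_eq_zero fun b _ => Finsupp.single_eq_of_ne' (by simp)
      have hPi : (∏ i : Fin l, (X (Sum.inl i) : MvPowerSeries (Fin l ⊕ Fin n) A)) =
          monomial one1 1 := by
        have hpp := prod_X_pow_monomial (A := A) Finset.univ
          (fun i : Fin l => (Sum.inl i : Fin l ⊕ Fin n)) (fun _ => 1)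
        rw [h1def]
        simpa [pow_one] using hpp
      set G : MvPowerSeries (Fin l ⊕ Fin n) A := fun m => coeff (m + one1) F with hGdef
      have hcoeffG : ∀ m, coeff m G = coeff (m + one1) F := fun m => rfl
      set F0 : MvPowerSeries (Fin l ⊕ Fin n) A :=
        F - (∏ i : Fin l, X (Sum.inl i)) * G with hF0def
      have hcoeffF0 : ∀ m, coeff m F0 = if one1 ≤ m then 0 else coeff m F := by
        intro m
        rw [hF0def, map_sub, hPi, coeff_monomial_mul]
        by_cases hm : one1 ≤ m
        · rw [if_pos hm, if_pos hm, one_mul, hcoeffG, tsub_add_cancel_of_le hm, sub_self]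
        · rw [if_neg hm, if_neg hm, sub_zero]
      have hnot : ∀ m : (Fin l ⊕ Fin n) →₀ ℕ, ¬ one1 ≤ m → ∃ i : Fin l, m (Sum.inl i) = 0 := by
        intro m hm
        by_contra hco
        push_neg at hco
        apply hm
        rw [Finsupp.le_def]
        intro s
        cases s with
        | inl i =>
          rw [h1l i]
          have := hco i
          omega
        | inr j =>
          rw [h1r j]
          exact Nat.zero_le _
      have hF0dvd : D ∣ F0 := by
        rw [hD_dvd]
        constructor
        · rw [C_dvd_iff]
          intro m
          rw [hcoeffF0]
          by_cases hm : one1 ≤ m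
          · rw [if_pos hm]
            exact dvd_zero _
          · rw [if_neg hm]
            obtain ⟨i, hi⟩ := hnot m hm
            have h3 := ((hD_dvd _).mp (hFi i)).1
            rw [C_dvd_iff] at h3
            have h4 := h3 m
            rw [coeff_setZero, if_pos hi] at h4
            exact h4
        · intro j
          rw [X_pow_dvd_iff]
          intro m hmj
          rw [hcoeffF0]
          by_cases hm : one1 ≤ m
          · rw [if_pos hm]
          · rw [if_neg hm]
            obtain ⟨i, hi⟩ := hnot m hm
            have h3 := ((hD_dvd _).mp (hFi i)).2 j
            rw [X_pow_dvd_iff] at h3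
            have h4 := h3 m hmj
            rw [coeff_setZero, if_pos hi] at h4
            exact h4
      obtain ⟨H, hH⟩ := hF0dvd
      have hsplit : mk F = mk D * mk H +
          mk ((∏ i : Fin l, X (Sum.inl i)) * G) := by
        rw [← map_mul, ← hH, ← map_add, hF0def]
        congr 1
        ring
      have hρmem : ρ ∈ Jd := by
        rw [hJd]
        exact Ideal.subset_span rfl
      have hmkρ : mk ρ = 0 := by
        rw [hmk]
        exact Ideal.Quotient.eq_zero_iff_mem.mpr hρmem
      have hmkPi : mk (∏ i : Fin l, (X (Sum.inl i) : MvPowerSeries (Fin l ⊕ Fin n) A)) =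
          mk ((u : MvPowerSeries (Fin l ⊕ Fin n) A) * C (σ := Fin l ⊕ Fin n) (R := A) (t ^ a) *
            ∏ j : Fin n, (X (Sum.inr j) : MvPowerSeries (Fin l ⊕ Fin n) A) ^ B j) := by
        have h5 : mk ((∏ i : Fin l, (X (Sum.inl i) : MvPowerSeries (Fin l ⊕ Fin n) A)) -
            (u : MvPowerSeries (Fin l ⊕ Fin n) A) * C (σ := Fin l ⊕ Fin n) (R := A) (t ^ a) *
              ∏ j : Fin n, (X (Sum.inr j) : MvPowerSeries (Fin l ⊕ Fin n) A) ^ B j) = 0 := by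
          rw [← hρ]
          exact hmkρ
        rw [map_sub, sub_eq_zero] at h5
        exact h5
      rw [hsplit]
      refine Ideal.add_mem _ (Ideal.mem_span_singleton.mpr ⟨mk H, rfl⟩) ?_
      obtain ⟨w, hw⟩ := hDdvdBterm
      have hs : ((u : MvPowerSeries (Fin l ⊕ Fin n) A) * C (σ := Fin l ⊕ Fin n) (R := A) (t ^ a) *
          ∏ j : Fin n, (X (Sum.inr j) : MvPowerSeries (Fin l ⊕ Fin n) A) ^ B j) * G =
          D * ((u : MvPowerSeries (Fin l ⊕ Fin n) A) * w * G) := by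
        rw [mul_assoc ((u : MvPowerSeries (Fin l ⊕ Fin n) A)) _ _, hw]
        ring
      refine Ideal.mem_span_singleton.mpr
        ⟨mk ((u : MvPowerSeries (Fin l ⊕ Fin n) A) * w * G), ?_⟩
      calc mk ((∏ i : Fin l, X (Sum.inl i)) * G)
          = mk (∏ i : Fin l, X (Sum.inl i)) * mk G := map_mul mk _ _
        _ = mk ((u : MvPowerSeries (Fin l ⊕ Fin n) A) * C (σ := Fin l ⊕ Fin n) (R := A) (t ^ a) *
              ∏ j : Fin n, (X (Sum.inr j) : MvPowerSeries (Fin l ⊕ Fin n) A) ^ B j) * mk G := by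
            rw [hmkPi]
        _ = mk (((u : MvPowerSeries (Fin l ⊕ Fin n) A) * C (σ := Fin l ⊕ Fin n) (R := A) (t ^ a) *
              ∏ j : Fin n, (X (Sum.inr j) : MvPowerSeries (Fin l ⊕ Fin n) A) ^ B j) * G) :=
            (map_mul mk _ _).symm
        _ = mk (D * ((u : MvPowerSeries (Fin l ⊕ Fin n) A) * w * G)) := by rw [hs]
        _ = mk D * mk ((u : MvPowerSeries (Fin l ⊕ Fin n) A) * w * G) := map_mul mk _ _
  · intro i
    refine ⟨?_, ?_, ?_, ?_, ?_, ?_, ?_⟩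
    · -- decomposition
      apply Ideal.comap_injective_of_surjective mk hsurj
      rw [hmapQ, comap_map_self mk hsurj (by rw [hker]; exact hJle (hρQd i))]
      rw [Ideal.comap_inf, hmapQ, comap_map_self mk hsurj (by rw [hker]; exact hJle (hρQ1 i))]
      rw [comap_iInf' mk]
      have hcongr : ∀ j : Fin n,
          Ideal.comap mk (⨅ (_ : j ∈ {j : Fin n | 0 < I j}),
            Ideal.span {mk (X (Sum.inl i)), mk ((X (Sum.inr j) :
              MvPowerSeries (Fin l ⊕ Fin n) A) ^ I j)}) =
          ⨅ (_ : j ∈ {j : Fin n | 0 < I j}),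
            Ideal.span {(X (Sum.inl i) : MvPowerSeries (Fin l ⊕ Fin n) A),
              (X (Sum.inr j) : MvPowerSeries (Fin l ⊕ Fin n) A) ^ I j} := by
        intro j
        rw [comap_iInf' mk]
        exact iInf_congr fun hj => by
          rw [hmapQ, comap_map_self mk hsurj (by rw [hker]; exact hJle (hρQ2 i j))]
      rw [iInf_congr hcongr]
      exact hdecompS i
    · rw [hmapQ]
      exact isPrimary_map mk hsurj (by rw [hker]; exact hJle (hρQ1 i)) (hprim1 i)
    · intro j hj
      rw [hmapQ]
      exact isPrimary_map mk hsurj (by rw [hker]; exact hJle (hρQ2 i j)) (hprim2 i j hj)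
    · rw [hmapQ, hmapQ, ← Ideal.map_radical_of_surjective hsurj
        (by rw [hker]; exact hJle (hρQ1 i)), hrad1 i]
    · intro j hj
      rw [hmapQ, hmapQ, ← Ideal.map_radical_of_surjective hsurj
        (by rw [hker]; exact hJle (hρQ2 i j)), hrad2 i j hj]
    · intro j hj
      constructor
      · intro hle
        have h1 : mk (C (σ := Fin l ⊕ Fin n) (R := A) t) ∈
            Ideal.span {mk (X (Sum.inl i)), mk (X (Sum.inr j))} :=
          hle (Ideal.subset_span (by simp))
        rw [hmapQ] at h1
        have h2 : C (σ := Fin l ⊕ Fin n) (R := A) t ∈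
            Ideal.span {(X (Sum.inl i) : MvPowerSeries (Fin l ⊕ Fin n) A), X (Sum.inr j)} := by
          have h2' := Ideal.mem_comap.mpr h1
          rwa [comap_map_self mk hsurj (by rw [hker]; exact hJle (hρQy i j hj))] at h2'
        rw [hQy, setZero_C, X_dvd_iff] at h2
        have h3 := h2 0 rfl
        rw [show (coeff 0 (C (σ := Fin l ⊕ Fin n) (R := A) t)) = t by simp [coeff_C]] at h3
        exact ht0 h3
      · intro hle
        have h1 : mk (X (Sum.inr j)) ∈
            Ideal.span {mk (X (Sum.inl i)), mk (C (σ := Fin l ⊕ Fin n) (R := A) t)} :=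
          hle (Ideal.subset_span (by simp))
        rw [hmapQ] at h1
        have h2 : (X (Sum.inr j) : MvPowerSeries (Fin l ⊕ Fin n) A) ∈
            Ideal.span {(X (Sum.inl i) : MvPowerSeries (Fin l ⊕ Fin n) A),
              C (σ := Fin l ⊕ Fin n) (R := A) t} := by
          have h2' := Ideal.mem_comap.mpr h1
          rwa [comap_map_self mk hsurj (by rw [hker]; exact hJle (hρQt i))] at h2'
        rw [hQt, setZero_X_ne (by simp), C_dvd_iff] at h2
        have h3 := h2 (Finsupp.single (Sum.inr j) 1)
        rw [coeff_index_single_self_X] at h3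
        exact htnu (isUnit_of_dvd_one h3)
    · intro j j' hj hj' hne hle
      have h1 : mk (X (Sum.inr j)) ∈
          Ideal.span {mk (X (Sum.inl i)), mk (X (Sum.inr j'))} :=
        hle (Ideal.subset_span (by simp))
      rw [hmapQ] at h1
      have h2 : (X (Sum.inr j) : MvPowerSeries (Fin l ⊕ Fin n) A) ∈
          Ideal.span {(X (Sum.inl i) : MvPowerSeries (Fin l ⊕ Fin n) A), X (Sum.inr j')} := by
        have h2' := Ideal.mem_comap.mpr h1
        rwa [comap_map_self mk hsurj (by rw [hker]; exact hJle (hρQy i j' hj'))] at h2'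
      rw [hQy, setZero_X_ne (by simp), X_dvd_iff] at h2
      have h3 := h2 (Finsupp.single (Sum.inr j) 1)
        (Finsupp.single_eq_of_ne' (by simp [hne]))
      rw [coeff_index_single_self_X] at h3
      exact one_ne_zero h3
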